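/- For every integer a ≥ 3, the additive submonoid of ℕ generated by the set {l_a + l_n : n ∈ ℕ} is equal to the additive submonoid generated by the finite set {l_a + l_0, l_a + l_1, …, l_a + l_a}, and this finite set is a minimal system of generators: no proper subset of it generates the same submonoid. In particular, the embedding dimension of T(a) is a + 1. -/

import Mathlib

/-- The Lucas sequence: l 0 = 2, l 1 = 1, l (n+2) = l (n+1) + l n. -/
def lucas : ℕ → ℕ
  | 0 => 2
  | 1 => 1
  | n + 2 => lucas (n + 1) + lucas n

/-- The modified (monotone) Lucas sequence: l̃ 0 = 1, l̃ 1 = 2, l̃ n = l n for n ≥ 2. -/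
def ltil : ℕ → ℕ
  | 0 => 1
  | 1 => 2
  | n + 2 => lucas (n + 2)

/-- β x : minimal number of summands in a representation of x as a sum of
modified Lucas numbers (with repetitions allowed). -/
noncomputable def beta (x : ℕ) : ℕ :=
  sInf {s : ℕ | ∃ k : ℕ, ∃ b : ℕ → ℕ,
    x = ∑ i ∈ Finset.range (k + 1), b i * ltil i ∧ s = ∑ i ∈ Finset.range (k + 1), b i}

/-- γ x : the greatest k with l̃ k ≤ x (for x ≥ 1). -/
noncomputable def gamma (x : ℕ) : ℕ := sSup {k : ℕ | ltil k ≤ x}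

/-- S a : the additive submonoid of ℕ generated by {l_a} ∪ {l_a + l_n : n ∈ ℕ}. -/
def Sset (a : ℕ) : AddSubmonoid ℕ :=
  AddSubmonoid.closure ({lucas a} ∪ {x : ℕ | ∃ n : ℕ, x = lucas a + lucas n})

/-- T a : the additive submonoid of ℕ generated by {l_a + l_n : n ∈ ℕ}. -/
def Tset (a : ℕ) : AddSubmonoid ℕ :=
  AddSubmonoid.closure {x : ℕ | ∃ n : ℕ, x = lucas a + lucas n}

theorem lucas_pos : ∀ n, 0 < lucas n
  | 0 => by simp [lucas]
  | 1 => by simp [lucas]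
  | n + 2 => by rw [lucas]; exact Nat.add_pos_left (lucas_pos (n + 1)) _

theorem lucas_add_two (n : ℕ) : lucas (n + 2) = lucas (n + 1) + lucas n := by rw [lucas]

theorem lucas_lt_succ {n : ℕ} (h : 1 ≤ n) : lucas n < lucas (n + 1) := by
  obtain ⟨k, rfl⟩ : ∃ k, n = k + 1 := ⟨n - 1, by omega⟩
  rw [lucas_add_two]
  have := lucas_pos k
  omega

theorem lucas_mono {m n : ℕ} (h1 : 1 ≤ m) (h : m < n) : lucas m < lucas n := by
  induction n with
  | zero => omega
  | succ k ih =>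
    rcases Nat.lt_or_ge m k with h' | h'
    · exact (ih h').trans (lucas_lt_succ (by omega))
    · have : m = k := by omega
      subst this; exact lucas_lt_succ h1

theorem lucas_le_of_le {i a : ℕ} (ha : 3 ≤ a) (h : i ≤ a) : lucas i ≤ lucas a := by
  rcases Nat.eq_zero_or_pos i with rfl | hi
  · have h2 : lucas 2 < lucas a := lucas_mono (by omega) (by omega)
    have : lucas 2 = 3 := by rw [lucas_add_two]; simp [lucas]
    have : lucas 0 = 2 := by simp [lucas]
    omega
  · rcases Nat.eq_or_lt_of_le h with rfl | h'
    · exact le_rfl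
    · exact (lucas_mono hi h').le

theorem lucas_ne_of_lt {i j : ℕ} (h : i < j) : lucas i ≠ lucas j := by
  rcases Nat.eq_zero_or_pos i with rfl | hi
  · have h0 : lucas 0 = 2 := by simp [lucas]
    have h1 : lucas 1 = 1 := by simp [lucas]
    have h2 : lucas 2 = 3 := by rw [lucas_add_two]; simp [lucas]
    rcases Nat.lt_or_ge j 3 with hj | hj
    · interval_cases j <;> omega
    · have : lucas 2 < lucas j := lucas_mono (by omega) (by omega)
      omega
  · exact (lucas_mono hi h).ne

theorem lucas_fib (b : ℕ) :
    ∀ m, lucas (b + 1 + m) = Nat.fib (m + 1) * lucas (b + 1) + Nat.fib m * lucas b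
  | 0 => by simp
  | 1 => by
    show lucas (b + 2) = Nat.fib 2 * lucas (b + 1) + Nat.fib 1 * lucas b
    rw [lucas_add_two]; simp [Nat.fib]
  | (m + 2) => by
    have h1 := lucas_fib b m
    have h2 := lucas_fib b (m + 1)
    have h3 : b + 1 + (m + 2) = (b + 1 + m) + 2 := by ring
    rw [h3, lucas_add_two, show b + 1 + m + 1 = b + 1 + (m + 1) from by ring, h1, h2]
    have f2 : Nat.fib (m + 2) = Nat.fib m + Nat.fib (m + 1) := Nat.fib_add_two
    have f1 : Nat.fib (m + 2 + 1) = Nat.fib (m + 1) + Nat.fib (m + 2) := Nat.fib_add_two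
    rw [f1, f2]
    ring

theorem mem_closure_lucas (a : ℕ) (ha : 3 ≤ a) (n : ℕ) :
    lucas a + lucas n ∈
      AddSubmonoid.closure
        ((((Finset.range (a + 1)).image fun i => lucas a + lucas i : Finset ℕ)) : Set ℕ) := by
  set C := AddSubmonoid.closure
      ((((Finset.range (a + 1)).image fun i => lucas a + lucas i : Finset ℕ)) : Set ℕ) with hC
  have hgen : ∀ i, i ≤ a → lucas a + lucas i ∈ C := by
    intro i hi
    apply AddSubmonoid.subset_closure
    simp only [Finset.coe_image, Set.mem_image, Finset.mem_coe, Finset.mem_range]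
    exact ⟨i, by omega, rfl⟩
  rcases le_or_gt n a with h | h
  · exact hgen n h
  · obtain ⟨k, rfl⟩ : ∃ k, n = a + (k + 1) := ⟨n - a - 1, by omega⟩
    obtain ⟨b, rfl⟩ : ∃ b, a = b + 3 := ⟨a - 3, by omega⟩
    have hid : lucas (b + 3 + (k + 1)) =
        Nat.fib (k + 2) * lucas (b + 3) + Nat.fib (k + 1) * lucas (b + 2) := by
      have := lucas_fib (b + 2) (k + 1)
      rw [show b + 2 + 1 + (k + 1) = b + 3 + (k + 1) from by ring,
        show b + 2 + 1 = b + 3 from by ring, show k + 1 + 1 = k + 2 from by ring] at this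
      exact this
    obtain ⟨s, hs⟩ : ∃ s, Nat.fib (k + 1) = s + 1 :=
      ⟨Nat.fib (k + 1) - 1, by have := Nat.fib_pos.mpr (show 0 < k + 1 by omega); omega⟩
    have hfib : Nat.fib (k + 2) = Nat.fib k + Nat.fib (k + 1) := Nat.fib_add_two
    have hx : lucas (b + 2) = lucas (b + 1) + lucas b := lucas_add_two b
    rcases Nat.even_or_odd (Nat.fib k) with ⟨t, ht⟩ | ⟨t, ht⟩
    · have key : lucas (b + 3) + lucas (b + 3 + (k + 1)) =
          t • (lucas (b + 3) + lucas (b + 3)) + (s • (lucas (b + 3) + lucas (b + 2)) +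
          ((lucas (b + 3) + lucas (b + 1)) + (lucas (b + 3) + lucas b))) := by
        simp only [smul_eq_mul]
        rw [hid, hfib, hs, ht, hx]
        ring
      rw [key]
      exact AddSubmonoid.add_mem _ (AddSubmonoid.nsmul_mem _ (hgen (b + 3) le_rfl) t)
        (AddSubmonoid.add_mem _ (AddSubmonoid.nsmul_mem _ (hgen (b + 2) (by omega)) s)
          (AddSubmonoid.add_mem _ (hgen (b + 1) (by omega)) (hgen b (by omega))))
    · have key : lucas (b + 3) + lucas (b + 3 + (k + 1)) =
          (t + 1) • (lucas (b + 3) + lucas (b + 3)) +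
          (s + 1) • (lucas (b + 3) + lucas (b + 2)) := by
        simp only [smul_eq_mul]
        rw [hid, hfib, hs, ht]
        ring
      rw [key]
      exact AddSubmonoid.add_mem _ (AddSubmonoid.nsmul_mem _ (hgen (b + 3) le_rfl) (t + 1))
        (AddSubmonoid.nsmul_mem _ (hgen (b + 2) (by omega)) (s + 1))

theorem minimal_generators_T (a : ℕ) (ha : 3 ≤ a) :
    Tset a =
      AddSubmonoid.closure
        ((((Finset.range (a + 1)).image fun i => lucas a + lucas i : Finset ℕ)) : Set ℕ) ∧
    (∀ Y : Finset ℕ, Y ⊂ (Finset.range (a + 1)).image (fun i => lucas a + lucas i) →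
      AddSubmonoid.closure (Y : Set ℕ) ≠ Tset a) ∧
    ((Finset.range (a + 1)).image fun i => lucas a + lucas i).card = a + 1 := by
  have hinj : Set.InjOn (fun i => lucas a + lucas i) (Finset.range (a + 1)) := by
    intro i _ j _ hij
    simp only at hij
    by_contra hne
    rcases Nat.lt_or_ge i j with h | h
    · exact lucas_ne_of_lt h (by omega)
    · exact lucas_ne_of_lt (show j < i by omega) (by omega)
  have heq : Tset a = AddSubmonoid.closure
      ((((Finset.range (a + 1)).image fun i => lucas a + lucas i : Finset ℕ)) : Set ℕ) := by
    apply le_antisymm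
    · rw [Tset]
      apply AddSubmonoid.closure_le.mpr
      rintro x ⟨n, rfl⟩
      exact mem_closure_lucas a ha n
    · apply AddSubmonoid.closure_le.mpr
      intro x hx
      simp only [Finset.coe_image, Set.mem_image, Finset.mem_coe, Finset.mem_range] at hx
      obtain ⟨i, _, rfl⟩ := hx
      exact AddSubmonoid.subset_closure ⟨i, rfl⟩
  refine ⟨heq, ?_, ?_⟩
  · intro Y hY hcon
    obtain ⟨g, hgG, hgY⟩ := Finset.exists_of_ssubset hY
    have hYsub : ∀ y ∈ Y, ∃ i ≤ a, y = lucas a + lucas i := by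
      intro y hy
      have := hY.subset hy
      simp only [Finset.mem_image, Finset.mem_range] at this
      obtain ⟨i, hi, rfl⟩ := this
      exact ⟨i, by omega, rfl⟩
    obtain ⟨j, hj, rfl⟩ : ∃ j ≤ a, g = lucas a + lucas j := by
      simp only [Finset.mem_image, Finset.mem_range] at hgG
      obtain ⟨j, hj, rfl⟩ := hgG
      exact ⟨j, by omega, rfl⟩
    have hgmem : lucas a + lucas j ∈ AddSubmonoid.closure (Y : Set ℕ) := by
      rw [hcon, heq]
      apply AddSubmonoid.subset_closure
      simp only [Finset.coe_image, Set.mem_image, Finset.mem_coe, Finset.mem_range]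
      exact ⟨j, by omega, rfl⟩
    have hbound : ∀ x ∈ AddSubmonoid.closure (Y : Set ℕ),
        x = 0 ∨ x ∈ Y ∨ 2 * lucas a + 2 ≤ x := by
      intro x hx
      induction hx using AddSubmonoid.closure_induction with
      | mem y hy => exact Or.inr (Or.inl hy)
      | zero => exact Or.inl rfl
      | add u v _ _ hu hv =>
        have hlow : ∀ w ∈ Y, lucas a + 1 ≤ w := by
          intro w hw
          obtain ⟨i, _, rfl⟩ := hYsub w hw
          have := lucas_pos i
          omega
        rcases hu with rfl | hu | hu
        · simpa using hv
        · rcases hv with rfl | hv | hv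
          · simp only [add_zero]; exact Or.inr (Or.inl hu)
          · have h1 := hlow u hu
            have h2 := hlow v hv
            omega
          · have h1 := hlow u hu
            omega
        · rcases hv with rfl | hv | hv
          · simp only [add_zero]; omega
          · have h2 := hlow v hv
            omega
          · omega
    have := hbound _ hgmem
    have hjle : lucas j ≤ lucas a := lucas_le_of_le ha hj
    have := lucas_pos j
    have := lucas_pos a
    rcases hbound _ hgmem with h0 | hmem | hbig
    · omega
    · exact hgY hmem
    · omega
  · rw [Finset.card_image_of_injOn hinj, Finset.card_range]
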